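/- Let H be a finite simple graph of order n ≥ 2 and let k be an integer with 1 ≤ k ≤ C(K_1 + H). Then adim_k(K_1 + H) ≥ adim_k(H). -/

import Mathlib

open Finset

namespace AdjDim

noncomputable section
open Classical

variable {V W : Type*}

/-- Truncated distance `d_{G,2}(x,y) = min(d_G(x,y), 2)`:
`0` if `x = y`, `1` if `x` and `y` are adjacent, and `2` otherwise. -/
def d2 (G : SimpleGraph V) (x y : V) : ℕ :=
  if x = y then 0 else if G.Adj x y then 1 else 2

/-- `S` is a `k`-adjacency generator for `G`: every pair of distinct vertices is
distinguished (w.r.t. `d_{G,2}`) by at least `k` vertices of `S`. -/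
def IsKAdjGen (G : SimpleGraph V) [Fintype V] (k : ℕ) (S : Finset V) : Prop :=
  ∀ x y : V, x ≠ y → k ≤ (S.filter (fun w => d2 G x w ≠ d2 G y w)).card

/-- The `k`-adjacency dimension of `G`: the minimum cardinality of a
`k`-adjacency generator. -/
def adim (G : SimpleGraph V) [Fintype V] (k : ℕ) : ℕ :=
  sInf {n | ∃ S : Finset V, IsKAdjGen G k S ∧ S.card = n}

/-- `B` is a `k`-adjacency basis of `G`: a `k`-adjacency generator of minimum
cardinality. -/
def IsKAdjBasis (G : SimpleGraph V) [Fintype V] (k : ℕ) (B : Finset V) : Prop :=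
  IsKAdjGen G k B ∧ B.card = adim G k

/-- `G` is `k`-adjacency dimensional: `k` is the largest integer for which a
`k`-adjacency generator exists. -/
def IsKAdjDimensional (G : SimpleGraph V) [Fintype V] (k : ℕ) : Prop :=
  (∃ S : Finset V, IsKAdjGen G k S) ∧
    ∀ k' : ℕ, k < k' → ¬ ∃ S : Finset V, IsKAdjGen G k' S

/-- `C_G(x,y)`: the set of vertices distinguishing `x` and `y` w.r.t. `d_{G,2}`. -/
def CSet (G : SimpleGraph V) [Fintype V] (x y : V) : Finset V :=
  univ.filter (fun z => d2 G x z ≠ d2 G y z)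

/-- `C(G) = min_{x ≠ y} |C_G(x,y)|`. -/
def Cmin (G : SimpleGraph V) [Fintype V] : ℕ :=
  sInf {m | ∃ x y : V, x ≠ y ∧ (CSet G x y).card = m}

/-- `C_k(G)`: the union of the sets `C_G(x,y)` over pairs of distinct vertices
with `|C_G(x,y)| = k`. -/
def Ck (G : SimpleGraph V) [Fintype V] (k : ℕ) : Finset V :=
  univ.filter (fun z => ∃ x y : V, x ≠ y ∧ (CSet G x y).card = k ∧ z ∈ CSet G x y)

/-- Two distinct vertices `x, y` are twins: every other vertex is at the same
truncated distance from both. -/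
def Twins (G : SimpleGraph V) (x y : V) : Prop :=
  x ≠ y ∧ ∀ z : V, z ≠ x → z ≠ y → d2 G x z = d2 G y z

/-- The join `G + H` of two vertex-disjoint graphs. -/
def join (G : SimpleGraph V) (H : SimpleGraph W) : SimpleGraph (V ⊕ W) where
  Adj x y :=
    match x, y with
    | Sum.inl a, Sum.inl b => G.Adj a b
    | Sum.inr a, Sum.inr b => H.Adj a b
    | Sum.inl _, Sum.inr _ => True
    | Sum.inr _, Sum.inl _ => True
  symm := by
    refine ⟨?_⟩
    rintro (a | a) (b | b) h
    · exact G.adj_symm h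
    · trivial
    · trivial
    · exact H.adj_symm h
  loopless := by
    refine ⟨?_⟩
    rintro (a | a) h
    · exact G.irrefl h
    · exact H.irrefl h

/-- `K_1 + H`: the join of a one-vertex graph with `H`, i.e. `H` together with a
new universal vertex. -/
def K1join (H : SimpleGraph W) : SimpleGraph (Unit ⊕ W) :=
  join (⊥ : SimpleGraph Unit) H


lemma d2_inr_inr [Fintype W] (H : SimpleGraph W) (x w : W) :
    d2 (K1join H) (Sum.inr x) (Sum.inr w) = d2 H x w := by
  simp only [d2, K1join, join]
  by_cases hxw : x = w
  · simp [hxw]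
  · simp [hxw, fun h => hxw (Sum.inr.inj h)]
    exact if_congr Iff.rfl rfl rfl

lemma d2_inr_inl [Fintype W] (H : SimpleGraph W) (x : W) (u : Unit) :
    d2 (K1join H) (Sum.inr x) (Sum.inl u) = 1 := by
  simp [d2, K1join, join]

/-- Proposition 4.2: for a graph `H` of order `n ≥ 2` and
`1 ≤ k ≤ C(K₁ + H)`, `adim_k(K₁ + H) ≥ adim_k(H)`. -/
theorem adim_K1join_ge [Fintype W] (H : SimpleGraph W) (h : 2 ≤ Fintype.card W)
    (k : ℕ) (hk1 : 1 ≤ k) (hk2 : k ≤ Cmin (K1join H)) :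
    adim H k ≤ adim (K1join H) k := by
  have huniv : IsKAdjGen (K1join H) k univ := by
    intro a b hab
    have hmem : (CSet (K1join H) a b).card ∈
        {m | ∃ x y : Unit ⊕ W, x ≠ y ∧ (CSet (K1join H) x y).card = m} :=
      ⟨a, b, hab, rfl⟩
    have := le_trans hk2 (Nat.sInf_le hmem)
    simpa [CSet] using this
  have hne : {n | ∃ S : Finset (Unit ⊕ W), IsKAdjGen (K1join H) k S ∧ S.card = n}.Nonempty :=
    ⟨univ.card, univ, huniv, rfl⟩
  obtain ⟨S, hS, hScard⟩ := Nat.sInf_mem hne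
  set T : Finset W := univ.filter (fun w => Sum.inr w ∈ S) with hTdef
  have hT : IsKAdjGen H k T := by
    intro x y hxy
    have hk' := hS (Sum.inr x) (Sum.inr y) (by simpa using hxy)
    refine le_trans hk' ?_
    apply Finset.card_le_card_of_injOn (Sum.elim (fun _ => x) id)
    · rintro (u | w) hw
      · exfalso
        rw [Finset.mem_coe, Finset.mem_filter] at hw
        exact hw.2 (by rw [d2_inr_inl, d2_inr_inl])
      · rw [Finset.mem_coe, Finset.mem_filter] at hw
        rw [d2_inr_inr, d2_inr_inr] at hw
        simp [hTdef, hw.1, hw.2]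
    · rintro (u | a) ha (v | b) hb hab
      · exfalso
        rw [Finset.mem_coe, Finset.mem_filter] at ha
        exact ha.2 (by rw [d2_inr_inl, d2_inr_inl])
      · exfalso
        rw [Finset.mem_coe, Finset.mem_filter] at ha
        exact ha.2 (by rw [d2_inr_inl, d2_inr_inl])
      · exfalso
        rw [Finset.mem_coe, Finset.mem_filter] at hb
        exact hb.2 (by rw [d2_inr_inl, d2_inr_inl])
      · simpa using hab
  calc adim H k ≤ T.card := Nat.sInf_le ⟨T, hT, rfl⟩
    _ ≤ S.card := by
        apply Finset.card_le_card_of_injOn Sum.inr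
        · intro w hw
          rw [hTdef, Finset.mem_coe, Finset.mem_filter] at hw
          exact hw.2
        · intro a _ b _ hab
          exact Sum.inr.inj hab
    _ = adim (K1join H) k := hScard


end
end AdjDim
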